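/- For all positive integers m, n, every BQAP1 instance (q, c, d), and every feasible solution (σ,τ): ∑_{a : Fin n} ∑_{b : Fin m} f1(σ_a, τ_b) = m·n·A1(q,c,d), where σ_a(i) = σ(i) + a and τ_b(l) = τ(l) + b (addition in Fin n and Fin m, i.e. cyclic shifts modulo n and m). -/

import Mathlib

/-- Objective function of BQAP1. -/
noncomputable def f1 {m n : ℕ} (q : Fin m → Fin n → Fin m → Fin n → ℝ)
    (c d : Fin m → Fin n → ℝ) (σ : Fin m → Fin n) (τ : Fin n → Fin m) : ℝ :=
  (∑ i, ∑ l, q i (σ i) (τ l) l) + (∑ i, c i (σ i)) + (∑ l, d (τ l) l)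

/-- Average objective value of BQAP1. -/
noncomputable def A1 {m n : ℕ} (q : Fin m → Fin n → Fin m → Fin n → ℝ)
    (c d : Fin m → Fin n → ℝ) : ℝ :=
  (1 / ((m : ℝ) * n)) * (∑ i, ∑ j, ∑ k, ∑ l, q i j k l)
    + (1 / (n : ℝ)) * (∑ i, ∑ j, c i j)
    + (1 / (m : ℝ)) * (∑ i, ∑ j, d i j)

private lemma shift_sum {α : Type*} [Fintype α] [AddGroup α] (g : α → ℝ) (x : α) :
    ∑ a, g (x + a) = ∑ j, g j :=
  Equiv.sum_comp (Equiv.addLeft x) g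

theorem sum_over_shifts_BQAP1 (m n : ℕ) (hm : 0 < m) (hn : 0 < n)
    (q : Fin m → Fin n → Fin m → Fin n → ℝ) (c d : Fin m → Fin n → ℝ)
    (σ : Fin m → Fin n) (τ : Fin n → Fin m) :
    (∑ a : Fin n, ∑ b : Fin m,
        f1 q c d (fun i => σ i + a) (fun l => τ l + b)) =
      (m : ℝ) * n * A1 q c d := by
  haveI : NeZero m := ⟨hm.ne'⟩
  haveI : NeZero n := ⟨hn.ne'⟩
  have hC : ∑ a : Fin n, ∑ i, c i (σ i + a) = ∑ i, ∑ j, c i j := by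
    rw [Finset.sum_comm]
    exact Finset.sum_congr rfl fun i _ => shift_sum (c i) (σ i)
  have hD : ∑ b : Fin m, ∑ l, d (τ l + b) l = ∑ k, ∑ l, d k l := by
    rw [Finset.sum_comm]
    conv_rhs => rw [Finset.sum_comm]
    exact Finset.sum_congr rfl fun l _ => shift_sum (fun k => d k l) (τ l)
  have hQ : ∑ a : Fin n, ∑ b : Fin m, ∑ i, ∑ l, q i (σ i + a) (τ l + b) l
      = ∑ i, ∑ j, ∑ k, ∑ l, q i j k l := by
    have h1 : ∀ a : Fin n, ∑ b : Fin m, ∑ i, ∑ l, q i (σ i + a) (τ l + b) l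
        = ∑ i, ∑ l, ∑ k, q i (σ i + a) k l := by
      intro a
      rw [Finset.sum_comm]
      refine Finset.sum_congr rfl fun i _ => ?_
      rw [Finset.sum_comm]
      refine Finset.sum_congr rfl fun l _ => ?_
      exact shift_sum (fun k => q i (σ i + a) k l) (τ l)
    simp only [h1]
    rw [Finset.sum_comm]
    refine Finset.sum_congr rfl fun i _ => ?_
    rw [shift_sum (fun j => ∑ l, ∑ k, q i j k l) (σ i)]
    exact Finset.sum_congr rfl fun j _ => Finset.sum_comm
  simp only [f1, Finset.sum_add_distrib, Finset.sum_const, Finset.card_univ,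
    Fintype.card_fin, nsmul_eq_mul]
  rw [hQ, hD, ← Finset.mul_sum, hC, A1]
  have h1 : (m:ℝ) ≠ 0 := Nat.cast_ne_zero.mpr hm.ne'
  have h2 : (n:ℝ) ≠ 0 := Nat.cast_ne_zero.mpr hn.ne'
  field_simp
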